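/- Let d be a positive integer, k ≥ 2 an integer, J := [[0_d, −1_d],[1_d, 0_d]], and let A, B be 2d×2d real symmetric matrices with A − B ≥ iJ and A + (k−1)B ≥ iJ (so that the permutation-invariant matrix on k sites with blocks A, B is a covariance matrix). Set E := A + (k−1)B and F := A − B. Then A + (n−1)B ≥ iJ holds for every integer n ≥ k if and only if E ≥ F in the Loewner order (equivalently, B is positive semidefinite). -/

import Mathlib

open Matrix
open scoped ComplexOrder

/-- `M ≥ iK`: the complex Hermitian matrix `M - iK` is positive semidefinite. -/
def GeqI {m : Type*} [Fintype m] [DecidableEq m] (M K : Matrix m m ℝ) : Prop :=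
  (M.map Complex.ofReal - Complex.I • K.map Complex.ofReal).PosSemidef

section Aux

variable {m : Type*} [Fintype m] [DecidableEq m]

lemma aux_smul_psd_real {M : Matrix m m ℝ} (hM : M.PosSemidef) {c : ℝ} (hc : 0 ≤ c) :
    (c • M).PosSemidef := by
  rw [posSemidef_iff_dotProduct_mulVec]
  constructor
  · unfold Matrix.IsHermitian
    rw [conjTranspose_smul, hM.1]
    simp
  · intro x
    rw [smul_mulVec, dotProduct_smul]
    exact smul_nonneg hc (hM.dotProduct_mulVec_nonneg x)

lemma aux_smul_psd_complex {M : Matrix m m ℂ} (hM : M.PosSemidef) {c : ℝ} (hc : 0 ≤ c) :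
    ((c : ℂ) • M).PosSemidef := by
  rw [posSemidef_iff_dotProduct_mulVec]
  constructor
  · unfold Matrix.IsHermitian
    rw [conjTranspose_smul, hM.1]
    simp [Complex.conj_ofReal]
  · intro x
    rw [smul_mulVec, dotProduct_smul]
    refine smul_nonneg ?_ (hM.dotProduct_mulVec_nonneg x)
    exact_mod_cast hc

lemma aux_map_psd {B : Matrix m m ℝ} (hB : B.PosSemidef) :
    (B.map Complex.ofReal).PosSemidef := by
  obtain ⟨C, hC⟩ : ∃ C : Matrix m m ℝ, B = Cᴴ * C := by
    open scoped MatrixOrder in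
    have h0 : 0 ≤ B := hB.nonneg
    open scoped MatrixOrder in
    exact ⟨CFC.sqrt B, by
      rw [← Matrix.star_eq_conjTranspose, (CFC.sqrt_nonneg B).isSelfAdjoint.star_eq, CFC.sqrt_mul_sqrt_self B h0]⟩
  have : B.map Complex.ofReal = (C.map Complex.ofReal)ᴴ * (C.map Complex.ofReal) := by
    rw [hC]
    ext i j
    simp [Matrix.mul_apply, Matrix.conjTranspose_apply, Complex.conj_ofReal]
  rw [this]
  exact Matrix.posSemidef_conjTranspose_mul_self _

lemma aux_psd_of_map {B : Matrix m m ℝ} (hBs : B.IsSymm)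
    (h : (B.map Complex.ofReal).PosSemidef) : B.PosSemidef := by
  rw [posSemidef_iff_dotProduct_mulVec]
  constructor
  · exact hBs
  · intro x
    have := h.dotProduct_mulVec_nonneg (fun i => (x i : ℂ))
    have hcalc : star (fun i => (x i : ℂ)) ⬝ᵥ (B.map Complex.ofReal) *ᵥ (fun i => (x i : ℂ))
        = ((star x ⬝ᵥ B *ᵥ x : ℝ) : ℂ) := by
      simp only [dotProduct, mulVec, Matrix.map_apply, Pi.star_apply, star_trivial]
      push_cast
      simp [Complex.conj_ofReal]
    rw [hcalc] at this
    exact_mod_cast this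

end Aux

/-- For a permutation-invariant covariance matrix on `k ≥ 2` sites with
blocks `A, B` (so `F = A - B ≥ iJ` and `E = A + (k-1)B ≥ iJ`), the extension condition
`A + (n-1)B ≥ iJ` holds for every `n ≥ k` if and only if `E ≥ F` in the Loewner order,
equivalently `B` is positive semidefinite. -/
theorem infinitely_exchangeable_iff (d k : ℕ) (hd : 0 < d) (hk : 2 ≤ k)
    (J : Matrix (Fin d ⊕ Fin d) (Fin d ⊕ Fin d) ℝ)
    (hJ : J = Matrix.fromBlocks 0 (-1) 1 0)
    (A B : Matrix (Fin d ⊕ Fin d) (Fin d ⊕ Fin d) ℝ) (hA : A.IsSymm) (hB : B.IsSymm)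
    (hF : GeqI (A - B) J) (hE : GeqI (A + ((k : ℝ) - 1) • B) J)
    (E F : Matrix (Fin d ⊕ Fin d) (Fin d ⊕ Fin d) ℝ)
    (hEdef : E = A + ((k : ℝ) - 1) • B) (hFdef : F = A - B) :
    ((∀ n : ℕ, k ≤ n → GeqI (A + ((n : ℝ) - 1) • B) J) ↔ (E - F).PosSemidef)
    ∧ ((∀ n : ℕ, k ≤ n → GeqI (A + ((n : ℝ) - 1) • B) J) ↔ B.PosSemidef) := by
  set Cc : Matrix (Fin d ⊕ Fin d) (Fin d ⊕ Fin d) ℂ :=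
    (A - B).map Complex.ofReal - Complex.I • J.map Complex.ofReal with hCc
  have hdecomp : ∀ n : ℕ,
      (A + ((n : ℝ) - 1) • B).map Complex.ofReal - Complex.I • J.map Complex.ofReal
      = Cc + (n : ℂ) • B.map Complex.ofReal := by
    intro n
    ext i j
    simp [hCc, Matrix.map_apply, Matrix.sub_apply, Matrix.add_apply, Matrix.smul_apply]
    push_cast
    ring
  have hEF : E - F = (k : ℝ) • B := by
    rw [hEdef, hFdef]
    ext i j
    simp [Matrix.sub_apply, Matrix.add_apply, Matrix.smul_apply]
    ring
  -- main equivalence with B.PosSemidef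
  have main : (∀ n : ℕ, k ≤ n → GeqI (A + ((n : ℝ) - 1) • B) J) ↔ B.PosSemidef := by
    constructor
    · intro h
      refine aux_psd_of_map hB ?_
      have hherm : (B.map Complex.ofReal).IsHermitian := by
        unfold Matrix.IsHermitian
        rw [← Matrix.conjTranspose_map Complex.ofReal (fun r => by simp [Complex.conj_ofReal])]
        rw [Matrix.conjTranspose_eq_transpose_of_trivial]
        unfold Matrix.IsSymm at hB
        rw [hB]
      refine Matrix.PosSemidef.of_dotProduct_mulVec_nonneg hherm fun x => ?_
      set b : ℂ := star x ⬝ᵥ (B.map Complex.ofReal) *ᵥ x with hb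
      set c : ℂ := star x ⬝ᵥ Cc *ᵥ x with hc
      have key : ∀ n : ℕ, k ≤ n → 0 ≤ c + (n : ℂ) * b := by
        intro n hn
        have := Matrix.PosSemidef.dotProduct_mulVec_nonneg (h n hn) x
        rw [hdecomp n] at this
        rwa [Matrix.add_mulVec, Matrix.smul_mulVec, dotProduct_add,
          dotProduct_smul, smul_eq_mul] at this
      have h1 := key k le_rfl
      have h2 := key (k + 1) (Nat.le_succ k)
      rw [Complex.le_def] at h1 h2
      have him1 : c.im + (k : ℝ) * b.im = 0 := by
        have := h1.2; simp [Complex.add_im, Complex.mul_im] at this; linarith [this]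
      have him2 : c.im + ((k : ℝ) + 1) * b.im = 0 := by
        have := h2.2; push_cast at this
        simp [Complex.add_im, Complex.mul_im] at this; linarith [this]
      have hbim : b.im = 0 := by linarith
      have hbre : 0 ≤ b.re := by
        by_contra hneg
        push_neg at hneg
        obtain ⟨n, hn⟩ := exists_nat_gt (max (k : ℝ) (c.re / (-b.re)))
        have hnk : k ≤ n := by
          have := (le_max_left (k : ℝ) (c.re / (-b.re))).trans hn.le
          exact_mod_cast this
        have hre := (Complex.le_def.mp (key n hnk)).1
        simp [Complex.add_re, Complex.mul_re, hbim] at hre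
        have hn2 : c.re / (-b.re) < (n : ℝ) := lt_of_le_of_lt (le_max_right _ _) hn
        have : c.re < (n : ℝ) * (-b.re) := by
          rwa [div_lt_iff₀ (by linarith)] at hn2
        nlinarith
      rw [Complex.le_def]
      constructor
      · simpa using hbre
      · simpa using hbim.symm
    · intro hBpsd n hn
      unfold GeqI
      rw [hdecomp n]
      have h1 : Cc.PosSemidef := hF
      have h2 : ((n : ℂ) • B.map Complex.ofReal).PosSemidef := by
        have := aux_smul_psd_complex (aux_map_psd hBpsd) (c := (n : ℝ)) (Nat.cast_nonneg n)
        simpa using this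
      exact h1.add h2
  constructor
  · rw [main, hEF]
    constructor
    · intro h
      exact aux_smul_psd_real h (by positivity)
    · intro h
      have hk0 : (0 : ℝ) < (k : ℝ) := by positivity
      have := aux_smul_psd_real h (c := (k : ℝ)⁻¹) (by positivity)
      rwa [smul_smul, inv_mul_cancel₀ hk0.ne', one_smul] at this
  · exact main
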